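/- Let G be a circular-arc graph with a fixed circular-arc model in which the arcs cover the whole circle, and let S ⊆ V(G). Suppose every vertex of G is adjacent to at least one vertex of S, and suppose no minimal set of arcs covering the whole circle induces an S-cycle. Then every induced S-cycle of G is contained in the set A_i of arcs containing some single point i of the circle. -/

import Mathlib

/-- A (closed) arc of the circle `ℝ / ℤ`: the image of a closed real interval
of length less than the full circle. -/
def IsArc (A : Set (AddCircle (1 : ℝ))) : Prop :=
  ∃ a b : ℝ, a ≤ b ∧ b - a < 1 ∧ A = (fun x : ℝ => (x : AddCircle (1 : ℝ))) '' Set.Icc a b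

/-- The circular-arc graph of a family of arcs: distinct vertices are adjacent
iff their arcs intersect. -/
def arcGraph {V : Type*} (arc : V → Set (AddCircle (1 : ℝ))) : SimpleGraph V where
  Adj u v := u ≠ v ∧ (arc u ∩ arc v).Nonempty
  symm := ⟨fun _ _ h => ⟨h.1.symm, Set.inter_comm _ _ ▸ h.2⟩⟩
  loopless := ⟨fun _ h => h.1 rfl⟩

/-- `C` is a minimal family of arcs covering the whole circle. -/
def MinCover {V : Type*} (arc : V → Set (AddCircle (1 : ℝ))) (C : Set V) : Prop :=
  (⋃ v ∈ C, arc v) = Set.univ ∧ ∀ C' ⊂ C, (⋃ v ∈ C', arc v) ≠ Set.univ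

/-- A walk is chordless if every edge of the graph between vertices of its
support is an edge of the walk. -/
def Chordless {V : Type*} (G : SimpleGraph V) {v : V} (c : G.Walk v v) : Prop :=
  ∀ u w, u ∈ c.support → w ∈ c.support → G.Adj u w → s(u, w) ∈ c.edges

open SimpleGraph Set

/- ### Walk combinatorics -/

private lemma path_start_edges {V : Type*} {G : SimpleGraph V} {v x : V}
    (r : G.Walk v x) (hr : r.IsPath) (hvx : v ≠ x) :
    ∃ y, ∀ w, s(v, w) ∈ r.edges ↔ w = y := by
  cases r with
  | nil => exact absurd rfl hvx
  | @cons _ y _ h' r' =>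
    rw [Walk.cons_isPath_iff] at hr
    refine ⟨y, fun w => ?_⟩
    rw [Walk.edges_cons, List.mem_cons]
    constructor
    · rintro (he | he)
      · rw [Sym2.eq_iff] at he
        rcases he with ⟨-, h2⟩ | ⟨h1, h2⟩
        · exact h2
        · exact absurd h1 h'.ne
      · exact absurd (r'.fst_mem_support_of_mem_edges he) hr.2
    · rintro rfl; exact Or.inl rfl

private lemma cycle_start_nbrs {V : Type*} {G : SimpleGraph V} {v : V}
    (c : G.Walk v v) (hc : c.IsCycle) :
    ∃ u₁ u₂, u₁ ≠ u₂ ∧ ∀ w, s(v, w) ∈ c.edges ↔ w = u₁ ∨ w = u₂ := by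
  cases c with
  | nil => exact absurd hc Walk.IsCycle.not_of_nil
  | @cons _ x _ h q =>
    rw [Walk.cons_isCycle_iff] at hc
    obtain ⟨hq, hvx⟩ := hc
    obtain ⟨y, hy⟩ := path_start_edges q.reverse hq.reverse h.ne
    have hqrev : ∀ w, s(v, w) ∈ q.edges ↔ w = y := by
      intro w
      have := hy w
      rwa [Walk.edges_reverse, List.mem_reverse] at this
    have hxy : x ≠ y := by
      rintro rfl
      exact hvx ((hqrev x).mpr rfl)
    refine ⟨x, y, hxy, fun w => ?_⟩
    rw [Walk.edges_cons, List.mem_cons]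
    constructor
    · rintro (he | he)
      · rw [Sym2.eq_iff] at he
        rcases he with ⟨-, h2⟩ | ⟨h1, h2⟩
        · exact Or.inl h2
        · exact absurd h1 h.ne
      · exact Or.inr ((hqrev w).mp he)
    · rintro (rfl | rfl)
      · exact Or.inl rfl
      · exact Or.inr ((hqrev w).mpr rfl)

private lemma cycle_nbrs {V : Type*} {G : SimpleGraph V} {v a : V}
    (c : G.Walk v v) (hc : c.IsCycle) (ha : a ∈ c.support) :
    ∃ u₁ u₂, u₁ ≠ u₂ ∧ ∀ w, s(a, w) ∈ c.edges ↔ w = u₁ ∨ w = u₂ := by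
  classical
  obtain ⟨u₁, u₂, hne, hiff⟩ := cycle_start_nbrs (c.rotate a ha) (hc.rotate ha)
  have hrot := c.rotate_edges a ha
  exact ⟨u₁, u₂, hne, fun w => (hrot.mem_iff (a := s(a, w))).symm.trans (hiff w)⟩

private lemma cycle_triangle {V : Type*} {G : SimpleGraph V} {v a u₁ u₂ : V}
    (c : G.Walk v v) (hc : c.IsCycle) (ha : a ∈ c.support)
    (hu₁ : s(a, u₁) ∈ c.edges) (hu₂ : s(a, u₂) ∈ c.edges) (h12 : u₁ ≠ u₂)
    (h121 : s(u₁, u₂) ∈ c.edges) :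
    ∀ b ∈ c.support, b = a ∨ b = u₁ ∨ b = u₂ := by
  have hadj1 : G.Adj a u₁ := c.adj_of_mem_edges hu₁
  have hadj2 : G.Adj a u₂ := c.adj_of_mem_edges hu₂
  have hs1 : u₁ ∈ c.support := c.snd_mem_support_of_mem_edges hu₁
  have hs2 : u₂ ∈ c.support := c.snd_mem_support_of_mem_edges hu₂
  have key : ∀ x y z : V, x ∈ c.support → y ≠ z → s(x, y) ∈ c.edges → s(x, z) ∈ c.edges →
      ∀ w, s(x, w) ∈ c.edges → w = y ∨ w = z := by
    intro x y z hx hyz hy hz w hw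
    obtain ⟨w₁, w₂, hw12, hiff⟩ := cycle_nbrs c hc hx
    rcases (hiff y).mp hy with rfl | rfl
    · rcases (hiff z).mp hz with h | rfl
      · exact absurd h.symm hyz
      · exact (hiff w).mp hw
    · rcases (hiff z).mp hz with rfl | h
      · exact ((hiff w).mp hw).symm
      · exact absurd h.symm hyz
  have hclosed : ∀ x, (x = a ∨ x = u₁ ∨ x = u₂) → ∀ w, s(x, w) ∈ c.edges →
      (w = a ∨ w = u₁ ∨ w = u₂) := by
    rintro x (rfl | rfl | rfl) w hw
    · rcases key x u₁ u₂ ha h12 hu₁ hu₂ w hw with rfl | rfl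
      · exact Or.inr (Or.inl rfl)
      · exact Or.inr (Or.inr rfl)
    · have h1 : s(x, a) ∈ c.edges := by rwa [Sym2.eq_swap]
      rcases key x a u₂ hs1 hadj2.ne h1 h121 w hw with rfl | rfl
      · exact Or.inl rfl
      · exact Or.inr (Or.inr rfl)
    · have h1 : s(x, a) ∈ c.edges := by rwa [Sym2.eq_swap]
      have h2 : s(x, u₁) ∈ c.edges := by rwa [Sym2.eq_swap]
      rcases key x a u₁ hs2 hadj1.ne h1 h2 w hw with rfl | rfl
      · exact Or.inl rfl
      · exact Or.inr (Or.inl rfl)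
  intro b hb
  have hconn := c.toSubgraph_connected
  have hbv : b ∈ c.toSubgraph.verts := (c.mem_verts_toSubgraph).mpr hb
  have hav : a ∈ c.toSubgraph.verts := (c.mem_verts_toSubgraph).mpr ha
  obtain ⟨w⟩ := hconn.preconnected ⟨a, hav⟩ ⟨b, hbv⟩
  suffices h : ∀ (x y : c.toSubgraph.verts) (p : c.toSubgraph.coe.Walk x y),
      ((x : V) = a ∨ (x : V) = u₁ ∨ (x : V) = u₂) →
      ((y : V) = a ∨ (y : V) = u₁ ∨ (y : V) = u₂) from
    h ⟨a, hav⟩ ⟨b, hbv⟩ w (Or.inl rfl)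
  intro x y p
  induction p with
  | nil => exact fun hx => hx
  | @cons u z _ hadj p ih =>
    intro hx
    apply ih
    have hAdj : c.toSubgraph.Adj (u : V) (z : V) := hadj
    exact hclosed _ hx _ ((c.mem_edges_toSubgraph).mp (Subgraph.mem_edgeSet.mpr hAdj))

/- ### Circle geometry -/

private lemma coe_sub_intCast (x : ℝ) (k : ℤ) :
    ((x - k : ℝ) : AddCircle (1 : ℝ)) = (x : ℝ) := by
  have h0 : ((k : ℝ) : AddCircle (1 : ℝ)) = 0 := by
    rw [AddCircle.coe_eq_zero_iff]
    exact ⟨k, by simp⟩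
  have : ((x - k : ℝ) : AddCircle (1 : ℝ)) = ((x : ℝ) : AddCircle (1 : ℝ)) - ((k : ℝ) : AddCircle (1 : ℝ)) := rfl
  rw [this, h0, sub_zero]

private lemma image_Icc_shift (a b : ℝ) (k : ℤ) :
    (fun x : ℝ => (x : AddCircle (1 : ℝ))) '' Set.Icc (a - k) (b - k)
      = (fun x : ℝ => (x : AddCircle (1 : ℝ))) '' Set.Icc a b := by
  ext z
  simp only [Set.mem_image, Set.mem_Icc]
  constructor
  · rintro ⟨x, hx, rfl⟩
    refine ⟨x + k, ⟨by linarith [hx.1], by linarith [hx.2]⟩, ?_⟩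
    have := coe_sub_intCast (x + k) k
    rw [add_sub_cancel_right] at this
    exact this.symm
  · rintro ⟨x, hx, rfl⟩
    exact ⟨x - k, ⟨by linarith [hx.1], by linarith [hx.2]⟩, coe_sub_intCast x k⟩

private lemma arc_lift {A : Set (AddCircle (1 : ℝ))} (hA : IsArc A) {t : ℝ}
    (hp : (t : AddCircle (1 : ℝ)) ∉ A) :
    ∃ a b : ℝ, t < a ∧ a ≤ b ∧ b < t + 1 ∧
      A = (fun x : ℝ => (x : AddCircle (1 : ℝ))) '' Set.Icc a b := by
  obtain ⟨a₀, b₀, hab, hlen, hAeq⟩ := hA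
  set k := toIcoDiv one_pos t a₀ with hkdef
  set a := toIcoMod one_pos t a₀ with hadef
  have hk : a = a₀ - k := by
    rw [hadef, toIcoMod, zsmul_eq_mul, mul_one]
  have ha_mem : a ∈ Set.Ico t (t + 1) := toIcoMod_mem_Ico one_pos t a₀
  set b := b₀ - (k : ℝ) with hbdef
  have hab' : a ≤ b := by rw [hk, hbdef]; linarith
  have hA' : A = (fun x : ℝ => (x : AddCircle (1 : ℝ))) '' Set.Icc a b := by
    rw [hAeq, ← image_Icc_shift a₀ b₀ k, hk, hbdef]
  have hta : t < a := by
    rcases lt_or_eq_of_le ha_mem.1 with h | h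
    · exact h
    · exfalso
      apply hp
      rw [hA', h]
      exact ⟨a, ⟨le_refl a, hab'⟩, rfl⟩
  have hbt : b < t + 1 := by
    by_contra hge
    push_neg at hge
    apply hp
    have hmem : (t + 1 : ℝ) ∈ Set.Icc a b := ⟨le_of_lt ha_mem.2, hge⟩
    have : ((t + 1 : ℝ) : AddCircle (1 : ℝ)) ∈ A := hA' ▸ ⟨t + 1, hmem, rfl⟩
    have heq : ((t + 1 : ℝ) : AddCircle (1 : ℝ)) = ((t : ℝ) : AddCircle (1 : ℝ)) := by
      have := coe_sub_intCast (t + 1) 1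
      simpa using this
    rwa [heq] at this
  exact ⟨a, b, hta, hab', hbt, hA'⟩

private lemma coe_inj_window {t x y : ℝ} (hx : x ∈ Set.Ioo t (t + 1)) (hy : y ∈ Set.Ioo t (t + 1))
    (h : (x : AddCircle (1 : ℝ)) = (y : ℝ)) : x = y :=
  (AddCircle.coe_eq_coe_iff_of_mem_Ico (Set.Ioo_subset_Ico_self hx)
    (Set.Ioo_subset_Ico_self hy)).mp h

private lemma isArc_isClosed {A : Set (AddCircle (1 : ℝ))} (hA : IsArc A) : IsClosed A := by
  obtain ⟨a, b, -, -, rfl⟩ := hA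
  exact (isCompact_Icc.image (AddCircle.continuous_mk' 1)).isClosed

private lemma isArc_isPreconnected {A : Set (AddCircle (1 : ℝ))} (hA : IsArc A) :
    IsPreconnected A := by
  obtain ⟨a, b, -, -, rfl⟩ := hA
  exact (isPreconnected_Icc).image _ ((AddCircle.continuous_mk' 1).continuousOn)

/- ### Main theorem -/

theorem stmt_6 {V : Type*} (arc : V → Set (AddCircle (1 : ℝ)))
    (harc : ∀ v, IsArc (arc v))
    (hcover : (⋃ v, arc v) = Set.univ)
    (S : Set V)
    (hdom : ∀ v, ∃ s ∈ S, (arcGraph arc).Adj v s)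
    (hnoSCycleCover : ∀ C : Set V, MinCover arc C →
      ¬ ∃ (v : V) (c : (arcGraph arc).Walk v v), c.IsCycle ∧ Chordless (arcGraph arc) c ∧
          (∀ u ∈ c.support, u ∈ C) ∧ ∃ u ∈ c.support, u ∈ S) :
    ∀ (v : V) (c : (arcGraph arc).Walk v v), c.IsCycle → Chordless (arcGraph arc) c →
      (∃ u ∈ c.support, u ∈ S) → ∃ p : AddCircle (1 : ℝ), ∀ u ∈ c.support, p ∈ arc u := by
  intro v c hcyc hchord hS
  classical
  by_contra hno
  push_neg at hno
  -- `final`: a triangle of cycle-edges whose three arcs share a point kills everything.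
  have final : ∀ (a u₁ u₂ : V) (q : AddCircle (1 : ℝ)), a ∈ c.support →
      s(a, u₁) ∈ c.edges → s(a, u₂) ∈ c.edges → u₁ ≠ u₂ →
      q ∈ arc a → q ∈ arc u₁ → q ∈ arc u₂ → False := by
    intro a u₁ u₂ q ha he1 he2 hne hqa hq1 hq2
    have hs1 : u₁ ∈ c.support := c.snd_mem_support_of_mem_edges he1
    have hs2 : u₂ ∈ c.support := c.snd_mem_support_of_mem_edges he2
    have hadj12 : (arcGraph arc).Adj u₁ u₂ := ⟨hne, ⟨q, hq1, hq2⟩⟩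
    have he12 : s(u₁, u₂) ∈ c.edges := hchord u₁ u₂ hs1 hs2 hadj12
    have htri := cycle_triangle c hcyc ha he1 he2 hne he12
    obtain ⟨u, hu, hqu⟩ := hno q
    rcases htri u hu with rfl | rfl | rfl
    · exact hqu hqa
    · exact hqu hq1
    · exact hqu hq2
  -- Step 1: the arcs of the support cover the circle.
  have hAcov : (⋃ u ∈ {x | x ∈ c.support}, arc u) = Set.univ := by
    by_contra hncov
    obtain ⟨p, hp⟩ : ∃ p : AddCircle (1 : ℝ), p ∉ ⋃ u ∈ {x | x ∈ c.support}, arc u := by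
      by_contra h
      push_neg at h
      exact hncov (Set.eq_univ_of_forall h)
    obtain ⟨t, rfl⟩ := QuotientAddGroup.mk_surjective p
    have hpt : ∀ u ∈ c.support, ((t : ℝ) : AddCircle (1 : ℝ)) ∉ arc u := by
      intro u hu hmem
      exact hp (Set.mem_biUnion hu hmem)
    -- lift all support arcs
    have Hlift : ∀ u : V, ∃ fa fb : ℝ, u ∈ c.support →
        t < fa ∧ fa ≤ fb ∧ fb < t + 1 ∧
        arc u = (fun x : ℝ => (x : AddCircle (1 : ℝ))) '' Set.Icc fa fb := by
      intro u
      by_cases hu : u ∈ c.support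
      · obtain ⟨fa, fb, h1, h2, h3, h4⟩ := arc_lift (harc u) (hpt u hu)
        exact ⟨fa, fb, fun _ => ⟨h1, h2, h3, h4⟩⟩
      · exact ⟨0, 0, fun h => absurd h hu⟩
    choose fa fb hf using Hlift
    -- pick the vertex with the largest left endpoint
    obtain ⟨a, haT, hamax⟩ := Finset.exists_max_image c.support.toFinset fa
      ⟨v, List.mem_toFinset.mpr c.start_mem_support⟩
    rw [List.mem_toFinset] at haT
    obtain ⟨u₁, u₂, hne, hiff⟩ := cycle_nbrs c hcyc haT
    have he1 : s(a, u₁) ∈ c.edges := (hiff u₁).mpr (Or.inl rfl)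
    have he2 : s(a, u₂) ∈ c.edges := (hiff u₂).mpr (Or.inr rfl)
    have hmemmax : ∀ u₀ : V, s(a, u₀) ∈ c.edges → ((fa a : ℝ) : AddCircle (1 : ℝ)) ∈ arc u₀ := by
      intro u₀ he
      have hs : u₀ ∈ c.support := c.snd_mem_support_of_mem_edges he
      have hadj : (arcGraph arc).Adj a u₀ := c.adj_of_mem_edges he
      obtain ⟨ha1, ha2, ha3, ha4⟩ := hf a haT
      obtain ⟨hb1, hb2, hb3, hb4⟩ := hf u₀ hs
      obtain ⟨z, hza, hzb⟩ := hadj.2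
      rw [ha4] at hza
      rw [hb4] at hzb
      obtain ⟨x, hx, rfl⟩ := hza
      obtain ⟨y, hy, hxy⟩ := hzb
      have hxy' : y = x := coe_inj_window
        ⟨lt_of_lt_of_le hb1 hy.1, lt_of_le_of_lt hy.2 hb3⟩
        ⟨lt_of_lt_of_le ha1 hx.1, lt_of_le_of_lt hx.2 ha3⟩ hxy
      subst hxy'
      have hmax : fa u₀ ≤ fa a := hamax u₀ (List.mem_toFinset.mpr hs)
      rw [hb4]
      exact ⟨fa a, ⟨hmax, le_trans hx.1 hy.2⟩, rfl⟩
    have hqa : ((fa a : ℝ) : AddCircle (1 : ℝ)) ∈ arc a := by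
      obtain ⟨ha1, ha2, ha3, ha4⟩ := hf a haT
      rw [ha4]
      exact ⟨fa a, ⟨le_refl _, ha2⟩, rfl⟩
    exact final a u₁ u₂ _ haT he1 he2 hne hqa (hmemmax u₁ he1) (hmemmax u₂ he2)
  -- Step 2: either the support is a minimal cover (contradiction with the hypothesis), or
  -- a proper subfamily covers, which forces a triangle with a common point.
  by_cases hmin : ∀ C' ⊂ {x | x ∈ c.support}, (⋃ u ∈ C', arc u) ≠ Set.univ
  · exact hnoSCycleCover {x | x ∈ c.support} ⟨hAcov, hmin⟩
      ⟨v, c, hcyc, hchord, fun u hu => hu, hS⟩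
  · push_neg at hmin
    obtain ⟨C', hC'sub, hC'cov⟩ := hmin
    obtain ⟨a, haS, haC⟩ := Set.exists_of_ssubset hC'sub
    obtain ⟨u₁, u₂, hne, hiff⟩ := cycle_nbrs c hcyc haS
    have he1 : s(a, u₁) ∈ c.edges := (hiff u₁).mpr (Or.inl rfl)
    have he2 : s(a, u₂) ∈ c.edges := (hiff u₂).mpr (Or.inr rfl)
    have hsubcov : arc a ⊆ arc u₁ ∪ arc u₂ := by
      intro z hz
      have : z ∈ ⋃ u ∈ C', arc u := hC'cov ▸ Set.mem_univ z
      simp only [Set.mem_iUnion, exists_prop] at this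
      obtain ⟨w, hwC, hzw⟩ := this
      have hwa : w ≠ a := fun h => haC (h ▸ hwC)
      have hadj : (arcGraph arc).Adj a w := ⟨hwa.symm, ⟨z, hz, hzw⟩⟩
      have hwS : w ∈ c.support := hC'sub.1 hwC
      have hew : s(a, w) ∈ c.edges := hchord a w haS hwS hadj
      rcases (hiff w).mp hew with rfl | rfl
      · exact Or.inl hzw
      · exact Or.inr hzw
    have hadj1 : (arcGraph arc).Adj a u₁ := c.adj_of_mem_edges he1
    have hadj2 : (arcGraph arc).Adj a u₂ := c.adj_of_mem_edges he2
    obtain ⟨q, hq⟩ := isPreconnected_closed_iff.mp (isArc_isPreconnected (harc a))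
      (arc u₁) (arc u₂) (isArc_isClosed (harc u₁)) (isArc_isClosed (harc u₂))
      hsubcov hadj1.2 hadj2.2
    exact final a u₁ u₂ q haS he1 he2 hne hq.1 hq.2.1 hq.2.2
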